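/- Let u, w be nontrivial elements of F_r such that neither is a prefix of the other (equivalently B_u ∩ B_w = ∅). Then (1/|S_n|) · Σ_{γ ∈ S_n, u prefix of γ} ⟨π(γ)1_B, 1_{B_w}⟩ / Ξ(γ) converges to 0 as n → ∞, where ⟨π(γ)1_B, 1_{B_w}⟩ = ∫_{B_w} P(γ,ξ)^{1/2} dμ(ξ). -/

import Mathlib

/-!
Setting: the free group `F_r = ⟨a₁,…,a_r⟩` (`r ≥ 2`), its boundary `B` of infinite
reduced words, the visual measure `μ` on `B`, the Gromov product, the Poisson kernel
`P(γ,ξ) = (2r-1)^(2(γ|ξ)-|γ|)` and the Harish-Chandra function `Ξ`.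
-/

open MeasureTheory Filter Topology ComplexConjugate
open scoped ENNReal

namespace ArxivFree

/-- The alphabet `S = {a₁^{±1},…,a_r^{±1}}` of generators and their inverses:
a letter is a generator together with a sign. -/
abbrev Letter (r : ℕ) := Fin r × Bool

/-- The inverse of a letter. -/
def bar {r : ℕ} (x : Letter r) : Letter r := (x.1, !x.2)

/-- The boundary `B`: infinite reduced words over the alphabet, i.e. sequences of
letters in which no letter is immediately followed by its inverse. -/
abbrev Boundary (r : ℕ) := {ξ : ℕ → Letter r // ∀ i, ξ (i + 1) ≠ bar (ξ i)}

/-- `l` is a (finite) prefix of the infinite word `ξ`. -/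
def IsPrefixSeq {r : ℕ} (l : List (Letter r)) (ξ : ℕ → Letter r) : Prop :=
  ∀ i, i < l.length → l[i]? = some (ξ i)

/-- The cylinder `B_u`: infinite reduced words admitting the reduced word of `u`
as a prefix. -/
def cylinder {r : ℕ} (u : FreeGroup (Fin r)) : Set (Boundary r) :=
  {ξ | IsPrefixSeq (FreeGroup.toWord u) ξ.1}

/-- The Gromov product: the length of the longest common prefix of the finite word `l`
and the infinite word `ξ`. -/
def gromov {r : ℕ} (l : List (Letter r)) (ξ : ℕ → Letter r) : ℕ :=
  Nat.findGreatest (fun k => ∀ i, i < k → l[i]? = some (ξ i)) l.length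

/-- The Poisson kernel `P(γ,ξ) = (2r-1)^(2(γ|ξ) - |γ|)`. -/
noncomputable def PK {r : ℕ} (γ : FreeGroup (Fin r)) (ξ : Boundary r) : ℝ :=
  (2 * (r : ℝ) - 1) ^
    (2 * (gromov (FreeGroup.toWord γ) ξ.1 : ℤ) - ((FreeGroup.toWord γ).length : ℤ))

/-- The sphere `S_n ⊆ F_r` of elements of word length `n`, as a finite set. -/
noncomputable def sphere (r n : ℕ) : Finset (FreeGroup (Fin r)) :=
  (Set.Finite.preimage (Function.Injective.injOn FreeGroup.toWord_injective)
    (List.finite_length_eq (Letter r) n)).toFinset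

/-- The Harish-Chandra function `Ξ(γ) = ∫_B P(γ,ξ)^{1/2} dμ(ξ)`. -/
noncomputable def HC {r : ℕ} (μ : Measure (Boundary r)) (γ : FreeGroup (Fin r)) : ℝ :=
  ∫ ξ, Real.sqrt (PK γ ξ) ∂μ



/-! ### Auxiliary lemmas -/

lemma reduce_eq_self_of_chain {r : ℕ} {l : List (Letter r)}
    (h : List.Chain' (fun a b => b ≠ bar a) l) : FreeGroup.reduce l = l := by
  induction l with
  | nil => rfl
  | cons a t ih =>
    have ht : FreeGroup.reduce t = t := ih h.tail
    rw [FreeGroup.reduce.cons, ht]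
    cases t with
    | nil => rfl
    | cons b t' =>
      have hab : b ≠ bar a := (List.isChain_cons_cons.1 h).1
      have : ¬ (a.1 = b.1 ∧ a.2 = !b.2) := by
        rintro ⟨h1, h2⟩
        exact hab (Prod.ext h1.symm (by simp [h2, bar]))
      simp only [this, if_false]

lemma chain_of_reduce_eq_self {r : ℕ} {l : List (Letter r)}
    (h : FreeGroup.reduce l = l) : List.Chain' (fun a b => b ≠ bar a) l := by
  induction l with
  | nil => exact List.isChain_nil
  | cons a t ih =>
    have ht : FreeGroup.reduce t = t := by
      rw [FreeGroup.reduce.cons] at h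
      rcases hrt : FreeGroup.reduce t with _ | ⟨b, t2⟩
      · rw [hrt] at h
        simp_all
      · have hlen : t2.length + 1 ≤ t.length := by
          have := (FreeGroup.reduce.red (L := t)).length_le
          rw [hrt] at this; simpa using this
        rw [hrt] at h
        dsimp only at h
        split_ifs at h with hc
        · exfalso
          have := congrArg List.length h
          simp at this
          omega
        · have : t = b :: t2 := by
            injection h with h1 h2
            exact h2.symm
          rw [this, ← hrt, this]
    have hchain := ih ht
    cases t with
    | nil => exact List.isChain_singleton _
    | cons b t' =>
      refine List.isChain_cons_cons.2 ⟨?_, hchain⟩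
      intro hb
      refine FreeGroup.reduce.not (L₁ := a :: b :: t') (L₂ := []) (L₃ := t')
        (x := a.1) (b := a.2) ?_
      rw [h, hb]
      simp [bar]

lemma reduced_take {r : ℕ} {l : List (Letter r)} (h : FreeGroup.reduce l = l) (k : ℕ) :
    FreeGroup.reduce (l.take k) = l.take k :=
  reduce_eq_self_of_chain ((chain_of_reduce_eq_self h).take k)

lemma toWord_mk_take {r : ℕ} (γ : FreeGroup (Fin r)) (k : ℕ) :
    (FreeGroup.mk ((FreeGroup.toWord γ).take k)).toWord = (FreeGroup.toWord γ).take k := by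
  rw [FreeGroup.toWord_mk, reduced_take (FreeGroup.reduce_toWord γ)]

lemma gromov_le {r : ℕ} (l : List (Letter r)) (ξ : ℕ → Letter r) : gromov l ξ ≤ l.length :=
  Nat.findGreatest_le _

lemma gromov_spec {r : ℕ} (l : List (Letter r)) (ξ : ℕ → Letter r) :
    ∀ i < gromov l ξ, l[i]? = some (ξ i) := by
  intro i hi
  rcases Nat.eq_zero_or_pos (gromov l ξ) with h | h
  · omega
  · have hs := Nat.findGreatest_of_ne_zero
      (P := fun k => ∀ i, i < k → l[i]? = some (ξ i)) (n := l.length) rfl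
      (Nat.pos_iff_ne_zero.mp h)
    exact hs i hi

lemma le_gromov_iff {r : ℕ} {l : List (Letter r)} {ξ : ℕ → Letter r} {k : ℕ}
    (hk : k ≤ l.length) :
    k ≤ gromov l ξ ↔ ∀ i < k, l[i]? = some (ξ i) :=
  ⟨fun h i hi => gromov_spec l ξ i (lt_of_lt_of_le hi h),
   fun h => Nat.le_findGreatest hk (fun i hi => h i hi)⟩

lemma gromovSet_eq_cylinder {r : ℕ} {γ : FreeGroup (Fin r)} {k : ℕ}
    (hk : k ≤ (FreeGroup.toWord γ).length) :
    {ξ : Boundary r | k ≤ gromov (FreeGroup.toWord γ) ξ.1}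
      = cylinder (FreeGroup.mk ((FreeGroup.toWord γ).take k)) := by
  ext ξ
  simp only [cylinder, Set.mem_setOf_eq, IsPrefixSeq, toWord_mk_take, List.length_take]
  rw [le_gromov_iff hk]
  constructor
  · intro h i hi
    rw [List.getElem?_take, if_pos (by omega)]
    exact h i (by omega)
  · intro h i hi
    have := h i (by omega)
    rwa [List.getElem?_take, if_pos (by omega)] at this

lemma measurableSet_prefixSet {r : ℕ} (l : List (Letter r)) (k : ℕ) :
    MeasurableSet {ξ : Boundary r | ∀ i < k, l[i]? = some (ξ.1 i)} := by
  have h : {ξ : Boundary r | ∀ i < k, l[i]? = some (ξ.1 i)}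
      = ⋂ i, {ξ : Boundary r | i < k → l[i]? = some (ξ.1 i)} := by
    ext ξ; simp
  rw [h]
  refine MeasurableSet.iInter fun i => ?_
  by_cases hi : i < k
  · have hmeas : Measurable fun ξ : Boundary r => ξ.1 i :=
      (measurable_pi_apply i).comp measurable_subtype_coe
    have h2 : {ξ : Boundary r | i < k → l[i]? = some (ξ.1 i)}
        = (fun ξ : Boundary r => ξ.1 i) ⁻¹' {a | l[i]? = some a} := by
      ext ξ; simp [hi]
    rw [h2]
    exact hmeas (Set.Countable.measurableSet (Set.to_countable _))
  · have h2 : {ξ : Boundary r | i < k → l[i]? = some (ξ.1 i)} = Set.univ := by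
      ext ξ; simp [hi]
    simp [h2]

lemma measurableSet_cylinder {r : ℕ} (u : FreeGroup (Fin r)) :
    MeasurableSet (cylinder u) :=
  measurableSet_prefixSet (FreeGroup.toWord u) (FreeGroup.toWord u).length

lemma measurableSet_gromovSet {r : ℕ} (l : List (Letter r)) (k : ℕ) (hk : k ≤ l.length) :
    MeasurableSet {ξ : Boundary r | k ≤ gromov l ξ.1} := by
  have h : {ξ : Boundary r | k ≤ gromov l ξ.1}
      = {ξ : Boundary r | ∀ i < k, l[i]? = some (ξ.1 i)} := by
    ext ξ; exact le_gromov_iff hk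
  rw [h]; exact measurableSet_prefixSet l k

lemma sqrt_PK_eq {r : ℕ} (hr : 2 ≤ r) (γ : FreeGroup (Fin r)) (ξ : Boundary r) :
    Real.sqrt (PK γ ξ) =
      (Real.sqrt (2 * (r : ℝ) - 1))⁻¹ ^ (FreeGroup.toWord γ).length
        * (2 * (r : ℝ) - 1) ^ gromov (FreeGroup.toWord γ) ξ.1 := by
  have hx : (0:ℝ) < 2 * (r : ℝ) - 1 := by
    have : (2:ℝ) ≤ (r:ℝ) := by exact_mod_cast hr
    linarith
  set g := gromov (FreeGroup.toWord γ) ξ.1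
  set n := (FreeGroup.toWord γ).length
  have hs : Real.sqrt (2 * (r : ℝ) - 1) ^ 2 = 2 * (r : ℝ) - 1 := Real.sq_sqrt hx.le
  have hPK : PK γ ξ = ((Real.sqrt (2 * (r : ℝ) - 1))⁻¹ ^ n * (2 * (r : ℝ) - 1) ^ g) ^ 2 := by
    show (2 * (r : ℝ) - 1) ^ (2 * (g : ℤ) - (n : ℤ)) = _
    rw [mul_pow, ← pow_mul, ← pow_mul, inv_pow, show n * 2 = 2 * n by ring, pow_mul, hs,
      zpow_sub₀ hx.ne', show (2 * (g : ℤ)) = ((2 * g : ℕ) : ℤ) by push_cast; ring,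
      zpow_natCast, zpow_natCast, show g * 2 = 2 * g by ring]
    ring
  rw [hPK, Real.sqrt_sq (by positivity)]

lemma pow_gromov_eq {r : ℕ} (hr : 2 ≤ r) (l : List (Letter r)) (ξ : Boundary r) :
    (2 * (r : ℝ) - 1) ^ gromov l ξ.1 =
      1 + ∑ k ∈ Finset.range l.length,
        ((2 * (r : ℝ) - 2) * (2 * (r : ℝ) - 1) ^ k) *
          Set.indicator {ξ' : Boundary r | k + 1 ≤ gromov l ξ'.1} (fun _ => (1:ℝ)) ξ := by
  have hx1 : (1:ℝ) < 2 * (r : ℝ) - 1 := by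
    have : (2:ℝ) ≤ (r:ℝ) := by exact_mod_cast hr
    linarith
  set g := gromov l ξ.1 with hg
  have hgle : g ≤ l.length := gromov_le l ξ.1
  have step : ∀ k ∈ Finset.range l.length,
      ((2 * (r : ℝ) - 2) * (2 * (r : ℝ) - 1) ^ k) *
          Set.indicator {ξ' : Boundary r | k + 1 ≤ gromov l ξ'.1} (fun _ => (1:ℝ)) ξ
        = if k ∈ Finset.range g then (2 * (r : ℝ) - 2) * (2 * (r : ℝ) - 1) ^ k else 0 := by
    intro k _
    by_cases hk : k + 1 ≤ g
    · rw [Set.indicator_of_mem (by exact hk), if_pos (by simp; omega)]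
      ring
    · rw [Set.indicator_of_notMem (by exact hk), if_neg (by simp; omega)]
      ring
  have hinter : Finset.range l.length ∩ Finset.range g = Finset.range g := by
    ext k; simp; omega
  rw [Finset.sum_congr rfl step, Finset.sum_ite_mem, hinter,
    ← Finset.mul_sum, geom_sum_eq hx1.ne']
  have hne : 2 * (r : ℝ) - 1 - 1 ≠ 0 := by linarith
  field_simp
  ring

lemma measure_gromovSet {r : ℕ} (μ : Measure (Boundary r))
    (hμ : ∀ u : FreeGroup (Fin r), u ≠ 1 →
      μ (cylinder u) =
        1 / (2 * (r : ℝ≥0∞) * (2 * (r : ℝ≥0∞) - 1) ^ ((FreeGroup.toWord u).length - 1)))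
    (γ : FreeGroup (Fin r)) {k : ℕ} (hk : k + 1 ≤ (FreeGroup.toWord γ).length) :
    μ {ξ : Boundary r | k + 1 ≤ gromov (FreeGroup.toWord γ) ξ.1}
      = 1 / (2 * (r : ℝ≥0∞) * (2 * (r : ℝ≥0∞) - 1) ^ k) := by
  rw [gromovSet_eq_cylinder hk]
  set v := FreeGroup.mk ((FreeGroup.toWord γ).take (k + 1)) with hv
  have hlen : (FreeGroup.toWord v).length = k + 1 := by
    rw [hv, toWord_mk_take, List.length_take]
    omega
  have hv1 : v ≠ 1 := by
    intro h
    rw [h, FreeGroup.toWord_one] at hlen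
    simp at hlen
  rw [hμ v hv1, hlen]
  simp

lemma toReal_measure_aux {r : ℕ} (hr : 2 ≤ r) (k : ℕ) :
    (1 / (2 * (r : ℝ≥0∞) * (2 * (r : ℝ≥0∞) - 1) ^ k)).toReal
      = 1 / (2 * (r : ℝ) * (2 * (r : ℝ) - 1) ^ k) := by
  have h1 : (2 * (r : ℝ≥0∞) - 1) = ((2 * r - 1 : ℕ) : ℝ≥0∞) := by
    rw [ENNReal.natCast_sub]
    push_cast
    ring
  have h2 : (2 * (r : ℝ≥0∞)) = ((2 * r : ℕ) : ℝ≥0∞) := by push_cast; ring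
  rw [h1, h2, ← Nat.cast_pow, ← Nat.cast_mul, one_div, ENNReal.toReal_inv,
    ENNReal.toReal_natCast, one_div]
  congr 1
  push_cast [Nat.cast_sub (show 1 ≤ 2 * r by omega)]
  ring

lemma hD_pos {r : ℕ} (hr : 2 ≤ r) (n : ℕ) :
    (0:ℝ) < 1 + (n : ℝ) * (((r : ℝ) - 1) / r) := by
  have h2 : (2:ℝ) ≤ (r:ℝ) := by exact_mod_cast hr
  have : (0:ℝ) ≤ (n : ℝ) * (((r : ℝ) - 1) / r) :=
    mul_nonneg (Nat.cast_nonneg n) (div_nonneg (by linarith) (by linarith))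
  linarith

lemma HC_eq {r : ℕ} (hr : 2 ≤ r) (μ : Measure (Boundary r)) [IsProbabilityMeasure μ]
    (hμ : ∀ u : FreeGroup (Fin r), u ≠ 1 →
      μ (cylinder u) =
        1 / (2 * (r : ℝ≥0∞) * (2 * (r : ℝ≥0∞) - 1) ^ ((FreeGroup.toWord u).length - 1)))
    (γ : FreeGroup (Fin r)) :
    HC μ γ = (Real.sqrt (2 * (r : ℝ) - 1))⁻¹ ^ (FreeGroup.toWord γ).length
      * (1 + ((FreeGroup.toWord γ).length : ℝ) * (((r : ℝ) - 1) / r)) := by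
  have hx1 : (1:ℝ) < 2 * (r : ℝ) - 1 := by
    have : (2:ℝ) ≤ (r:ℝ) := by exact_mod_cast hr
    linarith
  set l := FreeGroup.toWord γ with hl
  set n := l.length with hn
  set c := (Real.sqrt (2 * (r : ℝ) - 1))⁻¹ ^ n with hc
  have hmeas : ∀ k ∈ Finset.range n, MeasurableSet {ξ' : Boundary r | k + 1 ≤ gromov l ξ'.1} :=
    fun k hk => measurableSet_gromovSet l (k + 1) (by simpa using Finset.mem_range.1 hk)
  have hS : Integrable (fun ξ : Boundary r => ∑ k ∈ Finset.range n,
      ((2 * (r : ℝ) - 2) * (2 * (r : ℝ) - 1) ^ k) *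
        Set.indicator {ξ' : Boundary r | k + 1 ≤ gromov l ξ'.1} (fun _ => (1:ℝ)) ξ) μ := by
    refine integrable_finset_sum _ fun k hk => ?_
    exact (((integrable_const (1:ℝ)).indicator (hmeas k hk)).const_mul _)
  have key : HC μ γ = ∫ ξ, c * ((1:ℝ) + ∑ k ∈ Finset.range n,
      ((2 * (r : ℝ) - 2) * (2 * (r : ℝ) - 1) ^ k) *
        Set.indicator {ξ' : Boundary r | k + 1 ≤ gromov l ξ'.1} (fun _ => (1:ℝ)) ξ) ∂μ := by
    refine integral_congr_ae (Filter.Eventually.of_forall fun ξ => ?_)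
    beta_reduce
    rw [sqrt_PK_eq hr γ ξ, pow_gromov_eq hr γ.toWord ξ]
  rw [key, integral_const_mul]
  congr 1
  rw [integral_add (integrable_const 1) hS, integral_const]
  simp only [probReal_univ, measure_univ, ENNReal.toReal_one, smul_eq_mul, one_mul]
  congr 1
  rw [integral_finset_sum _ (fun k hk =>
    ((integrable_const (1:ℝ)).indicator (hmeas k hk)).const_mul _)]
  have hterm : ∀ k ∈ Finset.range n,
      (∫ ξ, ((2 * (r : ℝ) - 2) * (2 * (r : ℝ) - 1) ^ k) *
        Set.indicator {ξ' : Boundary r | k + 1 ≤ gromov l ξ'.1} (fun _ => (1:ℝ)) ξ ∂μ)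
      = ((r : ℝ) - 1) / r := by
    intro k hk
    rw [integral_const_mul, integral_indicator_const _ (hmeas k hk), measureReal_def,
      measure_gromovSet μ hμ γ (by simpa using Finset.mem_range.1 hk),
      toReal_measure_aux hr k]
    have hxk : (0:ℝ) < (2 * (r : ℝ) - 1) ^ k := by positivity
    have hr0 : (0:ℝ) < (r:ℝ) := by
      have : (2:ℝ) ≤ (r:ℝ) := by exact_mod_cast hr
      linarith
    have hb : (2 * (r : ℝ) - 1) ≠ 0 := by linarith
    rw [smul_eq_mul, mul_one]
    field_simp
  rw [Finset.sum_congr rfl hterm, Finset.sum_const, Finset.card_range, nsmul_eq_mul]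

lemma integrable_sqrt_PK {r : ℕ} (hr : 2 ≤ r) (μ : Measure (Boundary r))
    [IsProbabilityMeasure μ] (γ : FreeGroup (Fin r)) :
    Integrable (fun ξ : Boundary r => Real.sqrt (PK γ ξ)) μ := by
  set l := FreeGroup.toWord γ with hl
  set n := l.length with hn
  have hmeas : ∀ k ∈ Finset.range n, MeasurableSet {ξ' : Boundary r | k + 1 ≤ gromov l ξ'.1} :=
    fun k hk => measurableSet_gromovSet l (k + 1) (by simpa using Finset.mem_range.1 hk)
  have heq : (fun ξ : Boundary r => Real.sqrt (PK γ ξ))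
      = fun ξ : Boundary r => (Real.sqrt (2 * (r : ℝ) - 1))⁻¹ ^ n * ((1:ℝ) +
          ∑ k ∈ Finset.range n, ((2 * (r : ℝ) - 2) * (2 * (r : ℝ) - 1) ^ k) *
            Set.indicator {ξ' : Boundary r | k + 1 ≤ gromov l ξ'.1} (fun _ => (1:ℝ)) ξ) := by
    funext ξ
    beta_reduce
    rw [sqrt_PK_eq hr γ ξ, pow_gromov_eq hr γ.toWord ξ]
  rw [heq]
  refine Integrable.const_mul ?_ _
  exact (integrable_const 1).add (integrable_finset_sum _ fun k hk =>
    ((integrable_const (1:ℝ)).indicator (hmeas k hk)).const_mul _)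


lemma exists_disagree {α : Type*} {l₁ l₂ : List α} (h₁ : ¬ l₁ <+: l₂) (h₂ : ¬ l₂ <+: l₁) :
    ∃ i, i < l₁.length ∧ i < l₂.length ∧ l₁[i]? ≠ l₂[i]? := by
  by_contra hc
  push_neg at hc
  rcases le_total l₁.length l₂.length with hle | hle
  · apply h₁
    have h : l₁ = l₂.take l₁.length := by
      apply List.ext_getElem?
      intro i
      rw [List.getElem?_take]
      by_cases hi : i < l₁.length
      · rw [if_pos hi, hc i hi (lt_of_lt_of_le hi hle)]
      · rw [if_neg hi, List.getElem?_eq_none (by omega)]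
    rw [h]; exact List.take_prefix _ _
  · apply h₂
    have h : l₂ = l₁.take l₂.length := by
      apply List.ext_getElem?
      intro i
      rw [List.getElem?_take]
      by_cases hi : i < l₂.length
      · rw [if_pos hi, ← hc i (lt_of_lt_of_le hi hle) hi]
      · rw [if_neg hi, List.getElem?_eq_none (by omega)]
    rw [h]; exact List.take_prefix _ _

lemma gromov_le_on_cylinder {r : ℕ} {u w γ : FreeGroup (Fin r)} {i0 : ℕ}
    (hi0u : i0 < (FreeGroup.toWord u).length) (hi0w : i0 < (FreeGroup.toWord w).length)
    (hne : (FreeGroup.toWord u)[i0]? ≠ (FreeGroup.toWord w)[i0]?)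
    (hpre : FreeGroup.toWord u <+: FreeGroup.toWord γ) :
    ∀ ξ ∈ cylinder w, gromov (FreeGroup.toWord γ) ξ.1 ≤ i0 := by
  intro ξ hξ
  by_contra hcon
  push_neg at hcon
  have h1 : (FreeGroup.toWord γ)[i0]? = some (ξ.1 i0) := gromov_spec _ _ i0 hcon
  have h2 : (FreeGroup.toWord w)[i0]? = some (ξ.1 i0) := hξ i0 hi0w
  have h3 : (FreeGroup.toWord u)[i0]? = (FreeGroup.toWord γ)[i0]? := by
    rcases hpre with ⟨t, ht⟩
    rw [← ht, List.getElem?_append, if_pos hi0u]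
  exact hne (by rw [h3, h1, h2])

lemma term_bound {r : ℕ} (hr : 2 ≤ r) (μ : Measure (Boundary r)) [IsProbabilityMeasure μ]
    (hμ : ∀ u : FreeGroup (Fin r), u ≠ 1 →
      μ (cylinder u) =
        1 / (2 * (r : ℝ≥0∞) * (2 * (r : ℝ≥0∞) - 1) ^ ((FreeGroup.toWord u).length - 1)))
    (w γ : FreeGroup (Fin r)) (i0 : ℕ)
    (hgb : ∀ ξ ∈ cylinder w, gromov (FreeGroup.toWord γ) ξ.1 ≤ i0) :
    (∫ ξ in cylinder w, Real.sqrt (PK γ ξ) ∂μ) / HC μ γ ≤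
      ((2 * (r : ℝ) - 1) ^ i0 * (μ (cylinder w)).toReal)
        / (1 + ((FreeGroup.toWord γ).length : ℝ) * (((r : ℝ) - 1) / r)) := by
  have hx1 : (1:ℝ) < 2 * (r : ℝ) - 1 := by
    have : (2:ℝ) ≤ (r:ℝ) := by exact_mod_cast hr
    linarith
  set n := (FreeGroup.toWord γ).length with hn
  set c := (Real.sqrt (2 * (r : ℝ) - 1))⁻¹ ^ n with hc
  have hcpos : 0 < c := by
    rw [hc]
    have : 0 < Real.sqrt (2 * (r : ℝ) - 1) := Real.sqrt_pos.2 (by linarith)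
    positivity
  have hDpos : (0:ℝ) < 1 + (n : ℝ) * (((r : ℝ) - 1) / r) := hD_pos hr n
  have hnum : (∫ ξ in cylinder w, Real.sqrt (PK γ ξ) ∂μ)
      ≤ c * ((2 * (r : ℝ) - 1) ^ i0 * (μ (cylinder w)).toReal) := by
    have hle : ∀ ξ ∈ cylinder w, Real.sqrt (PK γ ξ) ≤ c * (2 * (r : ℝ) - 1) ^ i0 := by
      intro ξ hξ
      rw [sqrt_PK_eq hr γ ξ]
      refine mul_le_mul_of_nonneg_left ?_ hcpos.le
      exact pow_le_pow_right₀ (by linarith) (hgb ξ hξ)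
    calc (∫ ξ in cylinder w, Real.sqrt (PK γ ξ) ∂μ)
        ≤ ∫ _ in cylinder w, c * (2 * (r : ℝ) - 1) ^ i0 ∂μ := by
          refine setIntegral_mono_on ((integrable_sqrt_PK hr μ γ).integrableOn)
            (integrableOn_const (measure_lt_top μ _).ne)
            (measurableSet_cylinder w) hle
      _ = (μ (cylinder w)).toReal * (c * (2 * (r : ℝ) - 1) ^ i0) := by
          rw [setIntegral_const, smul_eq_mul, measureReal_def]
      _ = c * ((2 * (r : ℝ) - 1) ^ i0 * (μ (cylinder w)).toReal) := by ring
  rw [HC_eq hr μ hμ γ, ← hn, ← hc]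
  calc (∫ ξ in cylinder w, Real.sqrt (PK γ ξ) ∂μ) / (c * (1 + (n : ℝ) * (((r : ℝ) - 1) / r)))
      ≤ (c * ((2 * (r : ℝ) - 1) ^ i0 * (μ (cylinder w)).toReal))
          / (c * (1 + (n : ℝ) * (((r : ℝ) - 1) / r))) := by
        exact (div_le_div_iff_of_pos_right (by positivity)).2 hnum
    _ = ((2 * (r : ℝ) - 1) ^ i0 * (μ (cylinder w)).toReal)
          / (1 + (n : ℝ) * (((r : ℝ) - 1) / r)) := by
        rw [mul_div_mul_left _ _ hcpos.ne']

/-- Lemma: vanishing of off-diagonal matrix coefficients.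
If neither of the nontrivial elements $u, w$ is a prefix of the other
(equivalently $B_u ∩ B_w = ∅$), then
$(1/|S_n|) Σ_{γ ∈ S_n, u ≼ γ} ⟨π(γ)1_B, 1_{B_w}⟩/Ξ(γ) → 0$,
where $⟨π(γ)1_B, 1_{B_w}⟩ = ∫_{B_w} P(γ,ξ)^{1/2} dμ(ξ)$. -/
theorem matrix_coefficient_off_diagonal {r : ℕ} (hr : 2 ≤ r)
    [BorelSpace (Boundary r)]
    (μ : Measure (Boundary r)) [IsProbabilityMeasure μ]
    (hμ : ∀ u : FreeGroup (Fin r), u ≠ 1 →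
      μ (cylinder u) =
        1 / (2 * (r : ℝ≥0∞) * (2 * (r : ℝ≥0∞) - 1) ^ ((FreeGroup.toWord u).length - 1)))
    (u w : FreeGroup (Fin r)) (hu : u ≠ 1) (hw : w ≠ 1)
    (huw : ¬ (FreeGroup.toWord u <+: FreeGroup.toWord w))
    (hwu : ¬ (FreeGroup.toWord w <+: FreeGroup.toWord u)) :
    Tendsto
      (fun n : ℕ => (1 / ((sphere r n).card : ℝ)) *
        ∑ γ ∈ (sphere r n).filter (fun γ => FreeGroup.toWord u <+: FreeGroup.toWord γ),
          (∫ ξ in cylinder w, Real.sqrt (PK γ ξ) ∂μ) / HC μ γ)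
      atTop (𝓝 0) := by
  obtain ⟨i0, hi0u, hi0w, hne⟩ := exists_disagree huw hwu
  have hx1 : (1:ℝ) < 2 * (r : ℝ) - 1 := by
    have : (2:ℝ) ≤ (r:ℝ) := by exact_mod_cast hr
    linarith
  set C1 := (2 * (r : ℝ) - 1) ^ i0 * (μ (cylinder w)).toReal with hC1
  have hC1nn : 0 ≤ C1 := by
    have h1 := ENNReal.toReal_nonneg (a := μ (cylinder w))
    have h2 : (0:ℝ) ≤ (2 * (r : ℝ) - 1) ^ i0 := by positivity
    exact mul_nonneg h2 h1
  have hnonneg : ∀ n : ℕ, 0 ≤ (1 / ((sphere r n).card : ℝ)) *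
      ∑ γ ∈ (sphere r n).filter (fun γ => FreeGroup.toWord u <+: FreeGroup.toWord γ),
        (∫ ξ in cylinder w, Real.sqrt (PK γ ξ) ∂μ) / HC μ γ := by
    intro n
    refine mul_nonneg (by positivity) (Finset.sum_nonneg fun γ _ => ?_)
    refine div_nonneg ?_ ?_
    · exact setIntegral_nonneg (measurableSet_cylinder w) fun ξ _ => Real.sqrt_nonneg _
    · exact integral_nonneg fun ξ => Real.sqrt_nonneg _
  have hbound : ∀ n : ℕ, (1 / ((sphere r n).card : ℝ)) *
      ∑ γ ∈ (sphere r n).filter (fun γ => FreeGroup.toWord u <+: FreeGroup.toWord γ),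
        (∫ ξ in cylinder w, Real.sqrt (PK γ ξ) ∂μ) / HC μ γ
      ≤ C1 / (1 + (n : ℝ) * (((r : ℝ) - 1) / r)) := by
    intro n
    have hDpos := hD_pos hr n
    have hBnn : 0 ≤ C1 / (1 + (n : ℝ) * (((r : ℝ) - 1) / r)) := div_nonneg hC1nn hDpos.le
    set s := (sphere r n).filter (fun γ => FreeGroup.toWord u <+: FreeGroup.toWord γ) with hs
    have hsum : ∑ γ ∈ s, (∫ ξ in cylinder w, Real.sqrt (PK γ ξ) ∂μ) / HC μ γ
        ≤ (s.card : ℝ) * (C1 / (1 + (n : ℝ) * (((r : ℝ) - 1) / r))) := by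
      rw [← nsmul_eq_mul]
      refine Finset.sum_le_card_nsmul s _ _ fun γ hγ => ?_
      rw [hs, Finset.mem_filter] at hγ
      obtain ⟨hγs, hγu⟩ := hγ
      have hlen : (FreeGroup.toWord γ).length = n := by
        rw [sphere, Set.Finite.mem_toFinset] at hγs
        exact hγs
      have hterm := term_bound hr μ hμ w γ i0 (gromov_le_on_cylinder hi0u hi0w hne hγu)
      rwa [hlen] at hterm
    rcases Nat.eq_zero_or_pos (sphere r n).card with h0 | hpos
    · have hse : s = ∅ := by
        rw [hs, Finset.card_eq_zero.1 h0]
        rfl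
      rw [hse]
      simpa using hBnn
    · have hcard : (s.card : ℝ) ≤ ((sphere r n).card : ℝ) := by
        exact_mod_cast Finset.card_filter_le (sphere r n) _
      have hcpos : (0:ℝ) < ((sphere r n).card : ℝ) := by exact_mod_cast hpos
      calc (1 / ((sphere r n).card : ℝ)) *
            ∑ γ ∈ s, (∫ ξ in cylinder w, Real.sqrt (PK γ ξ) ∂μ) / HC μ γ
          ≤ (1 / ((sphere r n).card : ℝ)) * (((sphere r n).card : ℝ) *
              (C1 / (1 + (n : ℝ) * (((r : ℝ) - 1) / r)))) := by
            refine mul_le_mul_of_nonneg_left ?_ (by positivity)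
            exact hsum.trans (mul_le_mul_of_nonneg_right hcard hBnn)
        _ = C1 / (1 + (n : ℝ) * (((r : ℝ) - 1) / r)) := by
            field_simp
  refine squeeze_zero hnonneg hbound ?_
  have hcpos : (0:ℝ) < ((r:ℝ) - 1) / r := by
    have : (2:ℝ) ≤ (r:ℝ) := by exact_mod_cast hr
    exact div_pos (by linarith) (by linarith)
  have h1 : Tendsto (fun n : ℕ => 1 + (n : ℝ) * (((r : ℝ) - 1) / r)) atTop atTop :=
    tendsto_atTop_add_const_left _ 1
      (Tendsto.atTop_mul_const hcpos tendsto_natCast_atTop_atTop)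
  exact Tendsto.div_atTop tendsto_const_nhds h1

end ArxivFree
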